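/- Let n ≥ k+2 and suppose (s,t;n,k) is admissible. Suppose real numbers t₁ ∈ [0,(k+1)(n−k−1)], t₂ ∈ [0,k+1], s₁ ∈ [s,k] satisfy t₁ + t₂ = t. Then F(s₁,t₁;n−1,k) + max{F(s,t₂;k+1,k) − s₁, 0} ≥ F(s,t;n,k). -/

import Mathlib

noncomputable def fIndex (n k : ℕ) (s t : ℝ) : ℝ :=
  if s ≤ 0 then max 0 (t - k * (n - k : ℝ))
  else
    let d : ℤ := ⌈s⌉ - 1
    let σ : ℝ := s - d
    if t ≤ ((k : ℝ) - d - 1) * ((n : ℝ) - k) then s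
    else
      let r : ℝ := t - ((k : ℝ) - d - 1) * ((n : ℝ) - k)
      let m : ℤ := ⌈r / ((d : ℝ) + 2)⌉ - 1
      let τ : ℝ := r - ((d : ℝ) + 2) * m
      if τ ≤ 2 then s + m + min τ (min ((σ + τ) / 2) 1)
      else s + m + 1

noncomputable def G3 (σ x : ℝ) : ℝ := min x (min ((σ + x) / 2) 1)

noncomputable def stair (σ c x : ℝ) : ℝ :=
  ((⌈x / c⌉ - 1 : ℤ) : ℝ) + G3 σ (x - c * ((⌈x / c⌉ - 1 : ℤ) : ℝ))

lemma G3_nonneg {σ x : ℝ} (hσ : 0 ≤ σ) (hx : 0 ≤ x) : 0 ≤ G3 σ x :=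
  le_min hx (le_min (by linarith) (by norm_num))

lemma G3_le_one (σ x : ℝ) : G3 σ x ≤ 1 :=
  min_le_of_right_le (min_le_right _ _)

lemma G3_mono_x {σ x y : ℝ} (h : x ≤ y) : G3 σ x ≤ G3 σ y :=
  min_le_min h (min_le_min (by linarith) le_rfl)

lemma G3_mono_σ {σ σ' x : ℝ} (h : σ ≤ σ') : G3 σ x ≤ G3 σ' x :=
  min_le_min le_rfl (min_le_min (by linarith) le_rfl)

lemma G3_eq_one {σ x : ℝ} (hσ : 0 ≤ σ) (hx : 2 < x) : G3 σ x = 1 := by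
  simp only [G3, min_def]; split_ifs <;> linarith

lemma G3_subadd {σ a b : ℝ} (hσ : 0 ≤ σ) (ha : 0 ≤ a) (hb : 0 ≤ b) :
    G3 σ (a + b) ≤ G3 σ a + G3 σ b := by
  simp only [G3, min_def]; split_ifs <;> linarith

lemma G3_window2 {σ c τ h : ℝ} (hσ : 0 ≤ σ) (hc : 2 ≤ c) (hτ0 : 0 < τ) (hτ : τ ≤ c)
    (hh : 0 ≤ h) (hhc : h ≤ c) (hτ'0 : 0 < τ + h - c) :
    1 + G3 σ (τ + h - c) ≤ G3 σ τ + G3 σ h := by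
  simp only [G3, min_def]; split_ifs <;> linarith

lemma G3_step {σ τ : ℝ} (hσ : 0 ≤ σ) (hτ : 0 ≤ τ) : G3 1 τ ≤ G3 σ (τ + 1) := by
  simp only [G3, min_def]; split_ifs <;> linarith

lemma ceil_dec {c x : ℝ} (hc : 0 < c) (hx : 0 < x) :
    0 ≤ (⌈x / c⌉ - 1 : ℤ) ∧ 0 < x - c * ((⌈x / c⌉ - 1 : ℤ) : ℝ) ∧
      x - c * ((⌈x / c⌉ - 1 : ℤ) : ℝ) ≤ c := by
  have h1 : (0 : ℝ) < x / c := div_pos hx hc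
  have h2 : x / c ≤ (⌈x / c⌉ : ℝ) := Int.le_ceil _
  have h3 : (⌈x / c⌉ : ℝ) < x / c + 1 := Int.ceil_lt_add_one _
  have h4 : 0 < ⌈x / c⌉ := Int.ceil_pos.mpr h1
  have h5 : x ≤ (⌈x / c⌉ : ℝ) * c := (div_le_iff₀ hc).mp h2
  have h6 : ((⌈x / c⌉ : ℝ) - 1) * c < x := by
    have := (lt_div_iff₀ hc).mp (by linarith : (⌈x / c⌉ : ℝ) - 1 < x / c)
    linarith
  refine ⟨by omega, ?_, ?_⟩ <;> push_cast <;> nlinarith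

lemma ceil_eval {c x : ℝ} (hc : 0 < c) (q : ℤ) (ρ : ℝ) (hρ0 : 0 < ρ) (hρc : ρ ≤ c)
    (hx : x = c * q + ρ) : ⌈x / c⌉ = q + 1 := by
  rw [Int.ceil_eq_iff]
  constructor
  · push_cast
    rw [lt_div_iff₀ hc]
    nlinarith
  · push_cast
    rw [div_le_iff₀ hc]
    nlinarith

lemma stair_eval {σ c x : ℝ} (hc : 0 < c) (q : ℤ) (ρ : ℝ) (hρ0 : 0 < ρ) (hρc : ρ ≤ c)
    (hx : x = c * q + ρ) : stair σ c x = (q : ℝ) + G3 σ ρ := by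
  unfold stair
  rw [ceil_eval hc q ρ hρ0 hρc hx]
  have h1 : ((q + 1 - 1 : ℤ) : ℝ) = (q : ℝ) := by push_cast; ring
  rw [h1, hx]
  congr 1
  ring

lemma stair_nonneg {σ c x : ℝ} (hσ : 0 ≤ σ) (hc : 0 < c) (hx : 0 < x) : 0 ≤ stair σ c x := by
  obtain ⟨h1, h2, _⟩ := ceil_dec hc hx
  have h4 : (0 : ℝ) ≤ ((⌈x / c⌉ - 1 : ℤ) : ℝ) := by exact_mod_cast h1
  have := G3_nonneg hσ h2.le
  unfold stair; linarith

lemma stair_mono {σ c x y : ℝ} (hσ : 0 ≤ σ) (hc : 0 < c) (hx : 0 < x) (hxy : x ≤ y) :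
    stair σ c x ≤ stair σ c y := by
  have hy : 0 < y := hx.trans_le hxy
  obtain ⟨_, hτ1, _⟩ := ceil_dec hc hx
  obtain ⟨_, hτ2, _⟩ := ceil_dec hc hy
  have hmm : ⌈x / c⌉ ≤ ⌈y / c⌉ := Int.ceil_mono (by gcongr)
  rcases eq_or_lt_of_le hmm with he | hlt
  · unfold stair
    rw [he]
    have : x - c * ((⌈y / c⌉ - 1 : ℤ) : ℝ) ≤ y - c * ((⌈y / c⌉ - 1 : ℤ) : ℝ) := by linarith
    exact add_le_add_right (G3_mono_x this) _
  · unfold stair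
    have h1 : ((⌈x / c⌉ - 1 : ℤ) : ℝ) + 1 ≤ ((⌈y / c⌉ - 1 : ℤ) : ℝ) := by
      have : ⌈x / c⌉ - 1 + 1 ≤ ⌈y / c⌉ - 1 := by omega
      exact_mod_cast this
    have h2 := G3_le_one σ (x - c * ((⌈x / c⌉ - 1 : ℤ) : ℝ))
    have h3 := G3_nonneg hσ hτ2.le
    linarith

lemma stair_mono_σ {σ σ' c x : ℝ} (h : σ ≤ σ') : stair σ c x ≤ stair σ' c x :=
  add_le_add_right (G3_mono_σ h) _

lemma stair_lowlin {σ c x : ℝ} (hσ : 0 ≤ σ) (hc : 2 ≤ c) (hx : 0 < x) (K : ℤ)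
    (hK : x ≤ c * K) : x - (c - 1) * K ≤ stair σ c x := by
  have hc0 : (0 : ℝ) < c := by linarith
  obtain ⟨hm, hτ0, hτc⟩ := ceil_dec hc0 hx
  have hmK : ⌈x / c⌉ ≤ K := Int.ceil_le.mpr ((div_le_iff₀ hc0).mpr (by linarith))
  have hmK' : ((⌈x / c⌉ - 1 : ℤ) : ℝ) ≤ (K : ℝ) - 1 := by
    have : (⌈x / c⌉ - 1 : ℤ) ≤ K - 1 := by omega
    exact_mod_cast this
  have hm' : (0 : ℝ) ≤ ((⌈x / c⌉ - 1 : ℤ) : ℝ) := by exact_mod_cast hm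
  set m : ℝ := ((⌈x / c⌉ - 1 : ℤ) : ℝ) with hmdef
  have hG : (x - c * m) - (c - 1) ≤ G3 σ (x - c * m) := by
    refine le_min (by linarith) (le_min (by linarith) (by linarith))
  unfold stair
  rw [← hmdef]
  nlinarith [mul_nonneg (by linarith : (0:ℝ) ≤ c - 1) (by linarith : (0:ℝ) ≤ (K : ℝ) - 1 - m)]

lemma stair_window {σ c x h : ℝ} (hσ : 0 ≤ σ) (hc : 2 ≤ c) (hx : 0 < x) (hh0 : 0 ≤ h)
    (hhc : h ≤ c) : stair σ c (x + h) ≤ stair σ c x + G3 σ h := by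
  have hc0 : (0 : ℝ) < c := by linarith
  obtain ⟨hm, hτ0, hτc⟩ := ceil_dec hc0 hx
  obtain ⟨hm', hτ0', hτc'⟩ := ceil_dec hc0 (by linarith : (0:ℝ) < x + h)
  have h1 : ⌈x / c⌉ ≤ ⌈(x + h) / c⌉ := Int.ceil_mono (by gcongr; linarith)
  have h2 : ⌈(x + h) / c⌉ ≤ ⌈x / c⌉ + 1 := by
    have e1 : (x + h) / c ≤ x / c + 1 := by
      rw [div_le_iff₀ hc0]
      have : x / c * c = x := by field_simp
      nlinarith
    calc ⌈(x + h) / c⌉ ≤ ⌈x / c + 1⌉ := Int.ceil_mono e1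
      _ = ⌈x / c⌉ + 1 := Int.ceil_add_one _
  have hcase : ⌈(x + h) / c⌉ = ⌈x / c⌉ ∨ ⌈(x + h) / c⌉ = ⌈x / c⌉ + 1 := by omega
  unfold stair
  rcases hcase with he | he <;> rw [he]
  · have harg : x + h - c * ((⌈x / c⌉ - 1 : ℤ) : ℝ) =
        (x - c * ((⌈x / c⌉ - 1 : ℤ) : ℝ)) + h := by ring
    rw [harg]
    have := G3_subadd hσ hτ0.le hh0
    linarith
  · have hcast : ((⌈x / c⌉ + 1 - 1 : ℤ) : ℝ) = ((⌈x / c⌉ - 1 : ℤ) : ℝ) + 1 := by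
      push_cast; ring
    rw [hcast]
    set m : ℝ := ((⌈x / c⌉ - 1 : ℤ) : ℝ) with hmdef
    set τ : ℝ := x - c * m with hτdef
    have harg : x + h - c * (m + 1) = τ + h - c := by rw [hτdef]; ring
    rw [harg]
    have hτ'0 : 0 < τ + h - c := by
      have := hτ0'
      rw [he] at this
      push_cast at this
      rw [hτdef, hmdef]
      push_cast
      push_cast at this
      linarith
    have key := G3_window2 hσ hc hτ0 hτc hh0 hhc hτ'0
    linarith

lemma stair_step (e K : ℤ) (he0 : 0 ≤ e) {σ' : ℝ} (hσ0 : 0 ≤ σ') {x : ℝ} (hx : 0 < x)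
    (hK : x ≤ ((e : ℝ) + 1) * K) :
    stair 1 ((e : ℝ) + 1) x ≤ stair σ' ((e : ℝ) + 2) (x + (K : ℝ)) := by
  have he0' : (0 : ℝ) ≤ (e : ℝ) := by exact_mod_cast he0
  have hc1 : (0 : ℝ) < (e : ℝ) + 1 := by linarith
  obtain ⟨hm0, hτ0, hτc⟩ := ceil_dec hc1 hx
  set m : ℤ := ⌈x / ((e : ℝ) + 1)⌉ - 1 with hmdef
  set τ : ℝ := x - ((e : ℝ) + 1) * (m : ℝ) with hτdef
  have hmR : (0 : ℝ) ≤ (m : ℝ) := by exact_mod_cast hm0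
  have hmK : m ≤ K - 1 := by
    have : ⌈x / ((e : ℝ) + 1)⌉ ≤ K :=
      Int.ceil_le.mpr ((div_le_iff₀ hc1).mpr (by linarith))
    omega
  have hmKR : (m : ℝ) ≤ (K : ℝ) - 1 := by exact_mod_cast hmK
  have hxeq : x = ((e : ℝ) + 1) * m + τ := by rw [hτdef]; ring
  have E1 : stair 1 ((e : ℝ) + 1) x = (m : ℝ) + G3 1 τ :=
    stair_eval hc1 m τ hτ0 hτc hxeq
  have E2 : stair σ' ((e : ℝ) + 2) (((e : ℝ) + 2) * m + (τ + 1)) = (m : ℝ) + G3 σ' (τ + 1) :=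
    stair_eval (by linarith) m (τ + 1) (by linarith) (by linarith) rfl
  have hy0 : (0 : ℝ) < ((e : ℝ) + 2) * m + (τ + 1) := by nlinarith
  have hyK : ((e : ℝ) + 2) * m + (τ + 1) ≤ x + (K : ℝ) := by nlinarith
  have mono := stair_mono hσ0 (by linarith : (0:ℝ) < (e : ℝ) + 2) hy0 hyK
  have G := G3_step hσ0 hτ0.le
  linarith [E1, E2, mono, G]

lemma d_facts {s : ℝ} (hs : 0 < s) :
    0 ≤ (⌈s⌉ - 1 : ℤ) ∧ 0 < s - ((⌈s⌉ - 1 : ℤ) : ℝ) ∧ s - ((⌈s⌉ - 1 : ℤ) : ℝ) ≤ 1 := by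
  have h1 := Int.le_ceil s
  have h2 := Int.ceil_lt_add_one s
  have h3 : 0 < ⌈s⌉ := Int.ceil_pos.mpr hs
  refine ⟨by omega, by push_cast; linarith, by push_cast; linarith⟩

lemma fIndex_nonpos (n k : ℕ) (s t : ℝ) (hs : s ≤ 0) :
    fIndex n k s t = max 0 (t - k * ((n : ℝ) - k)) := by
  simp only [fIndex]
  rw [if_pos hs]

lemma fIndex_le_T0 (n k : ℕ) (s t : ℝ) (hs : 0 < s) (d : ℤ) (hd : d = ⌈s⌉ - 1)
    (hT : t ≤ ((k : ℝ) - (d : ℝ) - 1) * ((n : ℝ) - k)) : fIndex n k s t = s := by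
  subst hd
  simp only [fIndex]
  rw [if_neg (not_le.2 hs), if_pos hT]

lemma fIndex_pos_eval (n k : ℕ) (s t : ℝ) (hs : 0 < s) (d : ℤ) (hd : d = ⌈s⌉ - 1)
    (hT : ((k : ℝ) - (d : ℝ) - 1) * ((n : ℝ) - k) < t) :
    fIndex n k s t =
      s + stair (s - (d : ℝ)) ((d : ℝ) + 2) (t - ((k : ℝ) - (d : ℝ) - 1) * ((n : ℝ) - k)) := by
  have hσ : 0 ≤ s - ((⌈s⌉ - 1 : ℤ) : ℝ) := (d_facts hs).2.1.le
  subst hd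
  simp only [fIndex]
  rw [if_neg (not_le.2 hs), if_neg (not_le.2 hT)]
  unfold stair
  split_ifs with h
  · unfold G3; ring
  · rw [G3_eq_one hσ (not_le.1 h)]; ring

lemma fIndex_ge_s (n k : ℕ) (s t : ℝ) (hs0 : 0 ≤ s) : s ≤ fIndex n k s t := by
  rcases eq_or_lt_of_le hs0 with h | h
  · rw [fIndex_nonpos n k s t h.symm.le, ← h]; exact le_max_left _ _
  · obtain ⟨hd0, hσ0, hσ1⟩ := d_facts h
    by_cases hT : t ≤ ((k : ℝ) - ((⌈s⌉ - 1 : ℤ) : ℝ) - 1) * ((n : ℝ) - k)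
    · rw [fIndex_le_T0 n k s t h _ rfl hT]
    · rw [fIndex_pos_eval n k s t h _ rfl (not_le.1 hT)]
      have hc : (0 : ℝ) < ((⌈s⌉ - 1 : ℤ) : ℝ) + 2 := by
        have : (0 : ℝ) ≤ ((⌈s⌉ - 1 : ℤ) : ℝ) := by exact_mod_cast hd0
        linarith
      have := stair_nonneg hσ0.le hc (by linarith : (0:ℝ) < t - ((k : ℝ) - ((⌈s⌉ - 1 : ℤ) : ℝ) - 1) * ((n : ℝ) - k))
      linarith

lemma fIndex_mono_t (n k : ℕ) (s : ℝ) (hs0 : 0 ≤ s) {t t' : ℝ} (h : t ≤ t') :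
    fIndex n k s t ≤ fIndex n k s t' := by
  rcases eq_or_lt_of_le hs0 with hz | hp
  · rw [fIndex_nonpos n k s t hz.symm.le, fIndex_nonpos n k s t' hz.symm.le]
    exact max_le_max le_rfl (by linarith)
  · obtain ⟨hd0, hσ0, hσ1⟩ := d_facts hp
    have hc : (0 : ℝ) < ((⌈s⌉ - 1 : ℤ) : ℝ) + 2 := by
      have : (0 : ℝ) ≤ ((⌈s⌉ - 1 : ℤ) : ℝ) := by exact_mod_cast hd0
      linarith
    by_cases hT' : t' ≤ ((k : ℝ) - ((⌈s⌉ - 1 : ℤ) : ℝ) - 1) * ((n : ℝ) - k)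
    · rw [fIndex_le_T0 n k s t hp _ rfl (le_trans h hT'), fIndex_le_T0 n k s t' hp _ rfl hT']
    · rw [fIndex_pos_eval n k s t' hp _ rfl (not_le.1 hT')]
      by_cases hT : t ≤ ((k : ℝ) - ((⌈s⌉ - 1 : ℤ) : ℝ) - 1) * ((n : ℝ) - k)
      · rw [fIndex_le_T0 n k s t hp _ rfl hT]
        have := stair_nonneg hσ0.le hc (by linarith : (0:ℝ) < t' - ((k : ℝ) - ((⌈s⌉ - 1 : ℤ) : ℝ) - 1) * ((n : ℝ) - k))
        linarith
      · rw [fIndex_pos_eval n k s t hp _ rfl (not_le.1 hT)]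
        have := stair_mono hσ0.le hc (by linarith : (0:ℝ) < t - ((k : ℝ) - ((⌈s⌉ - 1 : ℤ) : ℝ) - 1) * ((n : ℝ) - k)) (by linarith : t - ((k : ℝ) - ((⌈s⌉ - 1 : ℤ) : ℝ) - 1) * ((n : ℝ) - k) ≤ t' - ((k : ℝ) - ((⌈s⌉ - 1 : ℤ) : ℝ) - 1) * ((n : ℝ) - k))
        linarith

lemma fIndex_star (n k : ℕ) (hn : 1 ≤ n) (s t : ℝ) (hs : 0 < s) (d : ℤ) (hd : d = ⌈s⌉ - 1)
    (hT : ((k : ℝ) - (d : ℝ) - 1) * ((n : ℝ) - k) < t) :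
    fIndex n k s t = fIndex (n - 1) k s (t - ((k : ℝ) - (d : ℝ) - 1)) := by
  have hcast : ((n - 1 : ℕ) : ℝ) = (n : ℝ) - 1 := by
    push_cast [hn]
    ring
  have hT2 : ((k : ℝ) - (d : ℝ) - 1) * (((n - 1 : ℕ) : ℝ) - k) < t - ((k : ℝ) - (d : ℝ) - 1) := by
    rw [hcast]
    have : ((k : ℝ) - (d : ℝ) - 1) * ((n : ℝ) - 1 - k) =
        ((k : ℝ) - (d : ℝ) - 1) * ((n : ℝ) - k) - ((k : ℝ) - (d : ℝ) - 1) := by ring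
    linarith
  rw [fIndex_pos_eval n k s t hs d hd hT, fIndex_pos_eval (n - 1) k s _ hs d hd hT2]
  congr 1
  rw [hcast]
  ring

lemma fIndex_eval2 (k : ℕ) (s t₂ : ℝ) (hs : 0 < s) (d : ℤ) (hd : d = ⌈s⌉ - 1)
    (hτ0 : 0 < t₂ - ((k : ℝ) - (d : ℝ) - 1)) (hτc : t₂ - ((k : ℝ) - (d : ℝ) - 1) ≤ (d : ℝ) + 2) :
    fIndex (k + 1) k s t₂ = s + G3 (s - (d : ℝ)) (t₂ - ((k : ℝ) - (d : ℝ) - 1)) := by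
  have hcast : ((k + 1 : ℕ) : ℝ) - (k : ℝ) = 1 := by push_cast; ring
  have hd0 : (0 : ℝ) ≤ (d : ℝ) := by
    have := (d_facts hs).1; rw [hd]; exact_mod_cast this
  have hT : ((k : ℝ) - (d : ℝ) - 1) * (((k + 1 : ℕ) : ℝ) - k) < t₂ := by
    rw [hcast]; linarith
  rw [fIndex_pos_eval (k + 1) k s t₂ hs d hd hT]
  have harg : t₂ - ((k : ℝ) - (d : ℝ) - 1) * (((k + 1 : ℕ) : ℝ) - k) =
      ((d : ℝ) + 2) * ((0 : ℤ) : ℝ) + (t₂ - ((k : ℝ) - (d : ℝ) - 1)) := by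
    rw [hcast]; push_cast; ring
  rw [harg, stair_eval (by linarith) 0 _ hτ0 hτc rfl]
  push_cast; ring

lemma fIndex_lowlin (n k : ℕ) (hkn : k ≤ n) (s t : ℝ) (hs0 : 0 ≤ s) (hsk : s ≤ k)
    (ht : t ≤ ((k : ℝ) + 1) * ((n : ℝ) - k)) :
    s + (t - k * ((n : ℝ) - k)) ≤ fIndex n k s t := by
  have hN0 : (0 : ℝ) ≤ (n : ℝ) - k := by
    have : (k : ℝ) ≤ n := by exact_mod_cast hkn
    linarith
  rcases eq_or_lt_of_le hs0 with hz | hp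
  · rw [fIndex_nonpos n k s t hz.symm.le, ← hz]
    simpa using le_max_right (0:ℝ) (t - k * ((n : ℝ) - k))
  · obtain ⟨hd0, hσ0, hσ1⟩ := d_facts hp
    have hdR : (0 : ℝ) ≤ ((⌈s⌉ - 1 : ℤ) : ℝ) := by exact_mod_cast hd0
    set dR : ℝ := ((⌈s⌉ - 1 : ℤ) : ℝ) with hdRdef
    by_cases hT : t ≤ ((k : ℝ) - dR - 1) * ((n : ℝ) - k)
    · rw [fIndex_le_T0 n k s t hp _ rfl hT]
      nlinarith
    · rw [fIndex_pos_eval n k s t hp _ rfl (not_le.1 hT)]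
      have hx0 : (0 : ℝ) < t - ((k : ℝ) - dR - 1) * ((n : ℝ) - k) := by linarith
      have hxK : t - ((k : ℝ) - dR - 1) * ((n : ℝ) - k) ≤ (dR + 2) * (((n : ℤ) - k : ℤ) : ℝ) := by
        push_cast
        nlinarith
      have := stair_lowlin hσ0.le (by linarith : (2:ℝ) ≤ dR + 2) hx0 ((n : ℤ) - k) hxK
      have hKcast : (((n : ℤ) - k : ℤ) : ℝ) = (n : ℝ) - k := by push_cast; ring
      rw [hKcast] at this
      nlinarith

lemma fIndex_window (n k : ℕ) (s t h : ℝ) (hs : 0 < s) (d : ℤ) (hd : d = ⌈s⌉ - 1)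
    (hh0 : 0 ≤ h) (hhc : h ≤ (d : ℝ) + 2) :
    fIndex n k s (t + h) ≤ fIndex n k s t + G3 (s - (d : ℝ)) h := by
  obtain ⟨hd0, hσ0, hσ1⟩ := d_facts hs
  rw [← hd] at hd0 hσ0 hσ1
  have hdR : (0 : ℝ) ≤ (d : ℝ) := by exact_mod_cast hd0
  have hc2 : (2 : ℝ) ≤ (d : ℝ) + 2 := by linarith
  have hG0 : 0 ≤ G3 (s - (d : ℝ)) h := G3_nonneg hσ0.le hh0
  by_cases hTh : t + h ≤ ((k : ℝ) - (d : ℝ) - 1) * ((n : ℝ) - k)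
  · rw [fIndex_le_T0 n k s (t + h) hs d hd hTh,
      fIndex_le_T0 n k s t hs d hd (by linarith)]
    linarith
  · rw [fIndex_pos_eval n k s (t + h) hs d hd (not_le.1 hTh)]
    by_cases hT : t ≤ ((k : ℝ) - (d : ℝ) - 1) * ((n : ℝ) - k)
    · rw [fIndex_le_T0 n k s t hs d hd hT]
      have hx0 : 0 < t + h - ((k : ℝ) - (d : ℝ) - 1) * ((n : ℝ) - k) := by linarith
      have hxh : t + h - ((k : ℝ) - (d : ℝ) - 1) * ((n : ℝ) - k) ≤ h := by linarith
      have heval : stair (s - (d : ℝ)) ((d : ℝ) + 2)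
          (t + h - ((k : ℝ) - (d : ℝ) - 1) * ((n : ℝ) - k)) =
          ((0 : ℤ) : ℝ) + G3 (s - (d : ℝ)) (t + h - ((k : ℝ) - (d : ℝ) - 1) * ((n : ℝ) - k)) :=
        stair_eval (by linarith) 0 _ hx0 (by linarith) (by push_cast; ring)
      rw [heval]
      have := G3_mono_x (σ := s - (d : ℝ)) hxh
      push_cast
      linarith
    · rw [fIndex_pos_eval n k s t hs d hd (not_le.1 hT)]
      have hx0 : 0 < t - ((k : ℝ) - (d : ℝ) - 1) * ((n : ℝ) - k) := by linarith
      have harg : t + h - ((k : ℝ) - (d : ℝ) - 1) * ((n : ℝ) - k) =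
          (t - ((k : ℝ) - (d : ℝ) - 1) * ((n : ℝ) - k)) + h := by ring
      rw [harg]
      have := stair_window hσ0.le hc2 hx0 hh0 hhc
      linarith

lemma fIndex_stepA (n k : ℕ) (s s₁ t : ℝ) (hs : 0 < s) (hss : s ≤ s₁)
    (hceil : ⌈s₁⌉ = ⌈s⌉) : fIndex n k s t + (s₁ - s) ≤ fIndex n k s₁ t := by
  have hs₁ : 0 < s₁ := lt_of_lt_of_le hs hss
  by_cases hT : t ≤ ((k : ℝ) - ((⌈s⌉ - 1 : ℤ) : ℝ) - 1) * ((n : ℝ) - k)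
  · rw [fIndex_le_T0 n k s t hs _ rfl hT,
      fIndex_le_T0 n k s₁ t hs₁ (⌈s⌉ - 1) (by rw [hceil]) hT]
    linarith
  · rw [fIndex_pos_eval n k s t hs _ rfl (not_le.1 hT),
      fIndex_pos_eval n k s₁ t hs₁ (⌈s⌉ - 1) (by rw [hceil]) (not_le.1 hT)]
    have := stair_mono_σ (c := ((⌈s⌉ - 1 : ℤ) : ℝ) + 2)
      (x := t - ((k : ℝ) - ((⌈s⌉ - 1 : ℤ) : ℝ) - 1) * ((n : ℝ) - k))
      (by linarith : s - ((⌈s⌉ - 1 : ℤ) : ℝ) ≤ s₁ - ((⌈s⌉ - 1 : ℤ) : ℝ))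
    linarith

lemma fIndex_stepB (n k : ℕ) (hkn : k ≤ n) (e : ℤ) (he1 : 1 ≤ e) (s₁ t : ℝ)
    (h1 : (e : ℝ) < s₁) (h2 : s₁ ≤ (e : ℝ) + 1) (ht0 : 0 ≤ t)
    (ht : t ≤ ((k : ℝ) + 1) * ((n : ℝ) - k)) :
    fIndex n k (e : ℝ) t + (s₁ - (e : ℝ)) ≤ fIndex n k s₁ t := by
  have hN0 : (0 : ℝ) ≤ (n : ℝ) - k := by
    have : (k : ℝ) ≤ n := by exact_mod_cast hkn
    linarith
  have heR : (1 : ℝ) ≤ (e : ℝ) := by exact_mod_cast he1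
  have hepos : (0 : ℝ) < (e : ℝ) := by linarith
  have hs₁ : 0 < s₁ := by linarith
  have hde : (e - 1 : ℤ) = ⌈(e : ℝ)⌉ - 1 := by rw [Int.ceil_intCast]
  have hceil₁ : ⌈s₁⌉ = e + 1 := by
    rw [Int.ceil_eq_iff]
    constructor <;> push_cast <;> linarith
  have hd₁ : e = ⌈s₁⌉ - 1 := by omega
  by_cases hTe : t ≤ ((k : ℝ) - ((e - 1 : ℤ) : ℝ) - 1) * ((n : ℝ) - k)
  · rw [fIndex_le_T0 n k (e : ℝ) t hepos (e - 1) hde hTe]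
    have := fIndex_ge_s n k s₁ t hs₁.le
    linarith
  · have hTe' := not_le.1 hTe
    have A3' : (k : ℝ) - ((e - 1 : ℤ) : ℝ) - 1 = (k : ℝ) - (e : ℝ) := by push_cast; ring
    rw [A3'] at hTe'
    have hT1 : ((k : ℝ) - (e : ℝ) - 1) * ((n : ℝ) - k) < t := by nlinarith
    rw [fIndex_pos_eval n k (e : ℝ) t hepos (e - 1) hde (by rw [A3']; exact hTe'),
      fIndex_pos_eval n k s₁ t hs₁ e hd₁ hT1]
    have A1 : (e : ℝ) - ((e - 1 : ℤ) : ℝ) = 1 := by push_cast; ring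
    have A2 : ((e - 1 : ℤ) : ℝ) + 2 = (e : ℝ) + 1 := by push_cast; ring
    have A4 : t - ((k : ℝ) - (e : ℝ) - 1) * ((n : ℝ) - k) =
        (t - ((k : ℝ) - (e : ℝ)) * ((n : ℝ) - k)) + ((n : ℝ) - k) := by ring
    rw [A3', A1, A2, A4]
    set x : ℝ := t - ((k : ℝ) - (e : ℝ)) * ((n : ℝ) - k) with hxdef
    have hx0 : 0 < x := by linarith
    have hxK : x ≤ ((e : ℝ) + 1) * (((n : ℤ) - k : ℤ) : ℝ) := by
      push_cast
      nlinarith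
    have step := stair_step e ((n : ℤ) - k) (by omega) (by linarith : (0:ℝ) ≤ s₁ - (e : ℝ)) hx0 hxK
    have hKcast : (((n : ℤ) - k : ℤ) : ℝ) = (n : ℝ) - k := by push_cast; ring
    rw [hKcast] at step
    linarith

lemma fIndex_B0 (n k : ℕ) (hkn : k ≤ n) (s₁ t : ℝ) (h1 : 0 < s₁) (h2 : s₁ ≤ 1)
    (ht0 : 0 ≤ t) (ht : t ≤ ((k : ℝ) + 1) * ((n : ℝ) - k)) :
    fIndex n k 0 t + s₁ ≤ fIndex n k s₁ t := by
  have hN0 : (0 : ℝ) ≤ (n : ℝ) - k := by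
    have : (k : ℝ) ≤ n := by exact_mod_cast hkn
    linarith
  have hceil₁ : ⌈s₁⌉ = 1 := by
    rw [Int.ceil_eq_iff]
    constructor <;> push_cast <;> linarith
  have hd₁ : (0 : ℤ) = ⌈s₁⌉ - 1 := by omega
  rw [fIndex_nonpos n k 0 t le_rfl]
  by_cases hT : t ≤ ((k : ℝ) - ((0 : ℤ) : ℝ) - 1) * ((n : ℝ) - k)
  · rw [fIndex_le_T0 n k s₁ t h1 0 hd₁ hT]
    have hT' : t - k * ((n : ℝ) - k) ≤ 0 := by
      push_cast at hT
      nlinarith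
    rw [max_eq_left hT']
    linarith
  · rw [fIndex_pos_eval n k s₁ t h1 0 hd₁ (not_le.1 hT)]
    push_cast at hT ⊢
    have hx0 : (0 : ℝ) < t - ((k : ℝ) - 0 - 1) * ((n : ℝ) - k) := by linarith [not_le.1 hT]
    have hxK : t - ((k : ℝ) - 0 - 1) * ((n : ℝ) - k) ≤ (0 + 2) * (((n : ℤ) - k : ℤ) : ℝ) := by
      push_cast
      nlinarith
    have hlow := stair_lowlin (by linarith : (0:ℝ) ≤ s₁ - 0) (by norm_num : (2:ℝ) ≤ 0 + 2) hx0
      ((n : ℤ) - k) hxK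
    have hKcast : (((n : ℤ) - k : ℤ) : ℝ) = (n : ℝ) - k := by push_cast; ring
    rw [hKcast] at hlow
    have hnn := stair_nonneg (by linarith : (0:ℝ) ≤ s₁ - 0) (by norm_num : (0:ℝ) < 0 + 2) hx0
    have hmax : max 0 (t - k * ((n : ℝ) - k)) ≤ stair (s₁ - 0) (0 + 2) (t - ((k : ℝ) - 0 - 1) * ((n : ℝ) - k)) := by
      refine max_le hnn ?_
      nlinarith
    linarith

lemma fIndex_smono (n k : ℕ) (hkn : k ≤ n) (s s₁ t : ℝ) (hs0 : 0 ≤ s) (hss : s ≤ s₁)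
    (hsk1 : s₁ ≤ k) (ht0 : 0 ≤ t) (ht : t ≤ ((k : ℝ) + 1) * ((n : ℝ) - k)) :
    fIndex n k s t + (s₁ - s) ≤ fIndex n k s₁ t := by
  suffices H : ∀ M : ℕ, ∀ s s₁ : ℝ, ⌈s₁⌉.toNat ≤ M → 0 ≤ s → s ≤ s₁ → s₁ ≤ k →
      fIndex n k s t + (s₁ - s) ≤ fIndex n k s₁ t by
    exact H ⌈s₁⌉.toNat s s₁ le_rfl hs0 hss hsk1
  intro M
  induction M with
  | zero =>
    intro s s₁ hm hs0 hss hsk1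
    have h1 : s₁ ≤ ((⌈s₁⌉ : ℤ) : ℝ) := Int.le_ceil s₁
    have h2 : ⌈s₁⌉ ≤ 0 := by omega
    have h3 : s₁ ≤ 0 := le_trans h1 (by exact_mod_cast h2)
    have h4 : s = s₁ := le_antisymm hss (by linarith)
    rw [h4]
    linarith
  | succ M ih =>
    intro s s₁ hm hs0 hss hsk1
    by_cases hs₁0 : s₁ ≤ 0
    · have h4 : s = s₁ := le_antisymm hss (by linarith)
      rw [h4]
      linarith
    push_neg at hs₁0
    set e : ℤ := ⌈s₁⌉ - 1 with hedef
    have he0 : 0 ≤ e := by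
      have := Int.ceil_pos.mpr hs₁0
      omega
    have heR : (e : ℝ) = ((⌈s₁⌉ : ℤ) : ℝ) - 1 := by rw [hedef]; push_cast; ring
    have hs₁e : (e : ℝ) < s₁ := by
      have := Int.ceil_lt_add_one s₁
      linarith [heR]
    have hs₁e1 : s₁ ≤ (e : ℝ) + 1 := by
      have := Int.le_ceil s₁
      linarith [heR]
    by_cases hse : (e : ℝ) < s
    · have hsp : 0 < s := lt_of_le_of_lt (by exact_mod_cast he0) hse
      have hceil : ⌈s₁⌉ = ⌈s⌉ := by
        have hup : ⌈s⌉ ≤ ⌈s₁⌉ := Int.ceil_mono hss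
        have hlow : e < ⌈s⌉ := Int.lt_ceil.mpr hse
        omega
      exact fIndex_stepA n k s s₁ t hsp hss hceil
    · push_neg at hse
      rcases eq_or_lt_of_le he0 with he0' | he1
      · have heR0 : ((e : ℤ) : ℝ) = 0 := by rw [← he0']; norm_num
        have hs00 : s = 0 := le_antisymm (by rw [heR0] at hse; exact hse) hs0
        rw [hs00]
        have := fIndex_B0 n k hkn s₁ t hs₁0 (by rw [heR0] at hs₁e1; linarith) ht0 ht
        linarith
      · have step := fIndex_stepB n k hkn e he1 s₁ t hs₁e hs₁e1 ht0 ht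
        have hmE : ⌈(e : ℝ)⌉.toNat ≤ M := by
          rw [Int.ceil_intCast]
          omega
        have ihe := ih s (e : ℝ) hmE hs0 hse (by
          have : (e : ℤ) + 1 ≤ (k : ℤ) := by
            have : ⌈s₁⌉ ≤ (k : ℤ) := Int.ceil_le.mpr (by exact_mod_cast hsk1)
            omega
          have h' : ((e : ℤ) : ℝ) + 1 ≤ (k : ℝ) := by exact_mod_cast this
          linarith)
        linarith

/-- Let `n ≥ k+2`, `(s,t;n,k)` admissible. If
`t₁ ∈ [0,(k+1)(n-k-1)]`, `t₂ ∈ [0,k+1]`, `s₁ ∈ [s,k]` satisfy `t₁ + t₂ = t`, then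
`F(s₁,t₁;n-1,k) + max (F(s,t₂;k+1,k) - s₁) 0 ≥ F(s,t;n,k)`. -/
theorem stmt_13 (n k : ℕ) (hk1 : 1 ≤ k) (hn : k + 2 ≤ n) (s t t₁ t₂ s₁ : ℝ)
    (hs0 : 0 ≤ s) (hsk : s ≤ k) (ht0 : 0 ≤ t) (ht : t ≤ (k + 1) * ((n : ℝ) - k))
    (ht1 : 0 ≤ t₁) (ht1' : t₁ ≤ (k + 1) * ((n : ℝ) - k - 1))
    (ht2 : 0 ≤ t₂) (ht2' : t₂ ≤ (k : ℝ) + 1)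
    (hs1 : s ≤ s₁) (hs1' : s₁ ≤ k) (hT : t₁ + t₂ = t) :
    fIndex n k s t ≤ fIndex (n - 1) k s₁ t₁ + max (fIndex (k + 1) k s t₂ - s₁) 0 := by
  have hN1 : (1 : ℝ) ≤ (n : ℝ) - k := by
    have : (k : ℝ) + 2 ≤ n := by exact_mod_cast hn
    linarith
  have hn1 : ((n - 1 : ℕ) : ℝ) = (n : ℝ) - 1 := by
    push_cast [show 1 ≤ n by omega]
    ring
  have hkn1 : k ≤ n - 1 := by omega
  have ht1'' : t₁ ≤ ((k : ℝ) + 1) * (((n - 1 : ℕ) : ℝ) - k) := by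
    rw [hn1]
    have : ((k : ℝ) + 1) * ((n : ℝ) - 1 - k) = ((k : ℝ) + 1) * ((n : ℝ) - k - 1) := by ring
    linarith
  have hs10 : (0 : ℝ) ≤ s₁ := le_trans hs0 hs1
  have hF1s : s₁ ≤ fIndex (n - 1) k s₁ t₁ := fIndex_ge_s _ _ _ _ hs10
  have hmax0 : (0 : ℝ) ≤ max (fIndex (k + 1) k s t₂ - s₁) 0 := le_max_right _ _
  have hmax1 : fIndex (k + 1) k s t₂ - s₁ ≤ max (fIndex (k + 1) k s t₂ - s₁) 0 := le_max_left _ _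
  by_cases hs : s ≤ 0
  · rw [fIndex_nonpos n k s t hs]
    have hlow : s₁ + (t₁ - k * (((n - 1 : ℕ) : ℝ) - k)) ≤ fIndex (n - 1) k s₁ t₁ :=
      fIndex_lowlin (n - 1) k hkn1 s₁ t₁ hs10 hs1' ht1''
    have hF2 : fIndex (k + 1) k s t₂ = max 0 (t₂ - k * (((k + 1 : ℕ) : ℝ) - k)) :=
      fIndex_nonpos _ _ _ _ hs
    have hF2ge : t₂ - (k : ℝ) ≤ fIndex (k + 1) k s t₂ := by
      rw [hF2]
      have harg : t₂ - (k : ℝ) * (((k + 1 : ℕ) : ℝ) - k) = t₂ - (k : ℝ) := by push_cast; ring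
      rw [harg]
      exact le_max_right _ _
    have hcast2 : (k : ℝ) * (((n - 1 : ℕ) : ℝ) - k) = (k : ℝ) * ((n : ℝ) - k) - k := by
      rw [hn1]; ring
    apply max_le
    · linarith
    · linarith
  · push_neg at hs
    obtain ⟨hd0, hσ0, hσ1⟩ := d_facts hs
    have hdR : (0 : ℝ) ≤ ((⌈s⌉ - 1 : ℤ) : ℝ) := by exact_mod_cast hd0
    by_cases h2 : t₂ ≤ (k : ℝ) - ((⌈s⌉ - 1 : ℤ) : ℝ) - 1
    · have hLF : fIndex n k s t ≤ fIndex (n - 1) k s₁ t₁ := by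
        by_cases hc1 : t ≤ ((k : ℝ) - ((⌈s⌉ - 1 : ℤ) : ℝ) - 1) * ((n : ℝ) - k)
        · rw [fIndex_le_T0 n k s t hs _ rfl hc1]
          linarith
        · rw [fIndex_star n k (by omega) s t hs _ rfl (not_le.1 hc1)]
          have hm1 : fIndex (n - 1) k s (t - ((k : ℝ) - ((⌈s⌉ - 1 : ℤ) : ℝ) - 1)) ≤
              fIndex (n - 1) k s t₁ :=
            fIndex_mono_t (n - 1) k s hs0 (by linarith)
          have hm2 := fIndex_smono (n - 1) k hkn1 s s₁ t₁ hs0 hs1 hs1' ht1 ht1''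
          linarith
      linarith
    · push_neg at h2
      have hτ0 : 0 < t₂ - ((k : ℝ) - ((⌈s⌉ - 1 : ℤ) : ℝ) - 1) := by linarith
      have hτc : t₂ - ((k : ℝ) - ((⌈s⌉ - 1 : ℤ) : ℝ) - 1) ≤ ((⌈s⌉ - 1 : ℤ) : ℝ) + 2 := by
        linarith
      have hF2 := fIndex_eval2 k s t₂ hs _ rfl hτ0 hτc
      have hG0 : 0 ≤ G3 (s - ((⌈s⌉ - 1 : ℤ) : ℝ)) (t₂ - ((k : ℝ) - ((⌈s⌉ - 1 : ℤ) : ℝ) - 1)) :=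
        G3_nonneg hσ0.le hτ0.le
      by_cases hc1 : t ≤ ((k : ℝ) - ((⌈s⌉ - 1 : ℤ) : ℝ) - 1) * ((n : ℝ) - k)
      · rw [fIndex_le_T0 n k s t hs _ rfl hc1]
        linarith
      · rw [fIndex_star n k (by omega) s t hs _ rfl (not_le.1 hc1)]
        have harg : t - ((k : ℝ) - ((⌈s⌉ - 1 : ℤ) : ℝ) - 1) =
            t₁ + (t₂ - ((k : ℝ) - ((⌈s⌉ - 1 : ℤ) : ℝ) - 1)) := by
          rw [← hT]; ring
        rw [harg]
        have W := fIndex_window (n - 1) k s t₁ _ hs _ rfl hτ0.le hτc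
        have S := fIndex_smono (n - 1) k hkn1 s s₁ t₁ hs0 hs1 hs1' ht1 ht1''
        linarith
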